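/- For any fixed β ∈ ℝ^d, the rescaled hyperbolic entropy φ̃_α(β) := φ_α(β) / ln(1/α) converges to the ℓ¹-norm ‖β‖₁ as α → 0⁺. -/

import Mathlib

open scoped BigOperators
open Filter Real Set

lemma arsinh_ident (c α : ℝ) (hc : 0 < c) (hα : 0 < α) :
    Real.arsinh (c / α^2) = Real.log (c + Real.sqrt (c^2 + α^4)) + 2 * Real.log (1/α) := by
  have hα2 : (0:ℝ) < α^2 := by positivity
  rw [Real.arsinh]
  have h1 : Real.sqrt (1 + (c/α^2)^2) = Real.sqrt (c^2 + α^4) / α^2 := by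
    rw [eq_div_iff hα2.ne', ← Real.sqrt_sq hα2.le, ← Real.sqrt_mul' _ (by positivity)]
    congr 1; field_simp; rw [Real.sq_sqrt (by positivity : (0:ℝ) ≤ α^4)]; ring
  rw [h1]
  have : c / α^2 + Real.sqrt (c^2+α^4)/α^2 = (c + Real.sqrt (c^2+α^4))/α^2 := by ring
  rw [this, Real.log_div (by positivity) hα2.ne', Real.log_pow,
    Real.log_div one_ne_zero hα.ne']
  push_cast; ring_nf; rw [Real.log_one]; ring

lemma L_atTop : Tendsto (fun α : ℝ => Real.log (1/α)) (nhdsWithin 0 (Ioi 0)) atTop :=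
  (Real.tendsto_log_atTop.comp tendsto_inv_nhdsGT_zero).congr
    (fun x => by simp [Function.comp, one_div])

lemma aux (b : ℝ) :
    Tendsto (fun α : ℝ => (1/2) * (b * Real.arsinh (b / α^2) - Real.sqrt (b^2 + α^4) + α^2)
        / Real.log (1/α)) (nhdsWithin 0 (Ioi 0)) (nhds |b|) := by
  rcases eq_or_ne b 0 with rfl | hb
  · have h0 : (fun α : ℝ => (1/2) * ((0:ℝ) * Real.arsinh (0 / α^2)
        - Real.sqrt (0^2 + α^4) + α^2) / Real.log (1/α))
        =ᶠ[nhdsWithin (0:ℝ) (Ioi 0)] (fun _ => (0:ℝ)) := by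
      filter_upwards [self_mem_nhdsWithin] with α (hα : 0 < α)
      have h4 : Real.sqrt ((0:ℝ)^2 + α^4) = α^2 := by
        rw [show (0:ℝ)^2 + α^4 = (α^2)^2 by ring, Real.sqrt_sq (by positivity)]
      rw [h4]; ring
    rw [show |(0:ℝ)| = 0 by simp]
    exact Tendsto.congr' h0.symm tendsto_const_nhds
  · set c := |b| with hcdef
    have hc : 0 < c := abs_pos.mpr hb
    have hbars : ∀ α : ℝ, b * Real.arsinh (b / α^2) = c * Real.arsinh (c / α^2) := by
      intro α
      rcases abs_cases b with ⟨h1, _⟩ | ⟨h1, _⟩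
      · rw [hcdef, h1]
      · rw [hcdef, h1]
        have : b / α^2 = -(-b / α^2) := by ring
        rw [this, Real.arsinh_neg]; ring
    have hb2 : b^2 = c^2 := (sq_abs b).symm
    have key : (fun α : ℝ =>
        (1/2) * c * (Real.log (c + Real.sqrt (c^2+α^4)) / Real.log (1/α) + 2)
          - (1/2) * (Real.sqrt (c^2+α^4) / Real.log (1/α))
          + (1/2) * (α^2 / Real.log (1/α)))
        =ᶠ[nhdsWithin (0:ℝ) (Ioi 0)]
        (fun α => (1/2) * (b * Real.arsinh (b / α^2) - Real.sqrt (b^2 + α^4) + α^2)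
          / Real.log (1/α)) := by
      filter_upwards [self_mem_nhdsWithin, L_atTop.eventually_gt_atTop 0]
        with α (hα : 0 < α) hL
      rw [hbars, hb2, arsinh_ident c α hc hα]
      field_simp
    refine Tendsto.congr' key ?_
    have hcont : Continuous fun α : ℝ => Real.sqrt (c^2+α^4) := by
      exact Real.continuous_sqrt.comp (by continuity)
    have hsq := (hcont.tendsto 0).mono_left (nhdsWithin_le_nhds (s := Ioi (0:ℝ)))
    rw [show Real.sqrt (c^2 + (0:ℝ)^4) = c by
      rw [show c^2 + (0:ℝ)^4 = c^2 by ring, Real.sqrt_sq hc.le]] at hsq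
    have hlog : Tendsto (fun α : ℝ => Real.log (c + Real.sqrt (c^2+α^4)))
        (nhdsWithin 0 (Ioi 0)) (nhds (Real.log (c + c))) :=
      (Real.continuousAt_log (by positivity : c + c ≠ 0)).tendsto.comp
        (tendsto_const_nhds.add hsq)
    have h1 : Tendsto (fun α : ℝ => Real.log (c + Real.sqrt (c^2+α^4)) / Real.log (1/α))
        (nhdsWithin 0 (Ioi 0)) (nhds 0) := hlog.div_atTop L_atTop
    have h2 : Tendsto (fun α : ℝ => Real.sqrt (c^2+α^4) / Real.log (1/α))
        (nhdsWithin 0 (Ioi 0)) (nhds 0) := hsq.div_atTop L_atTop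
    have h3 : Tendsto (fun α : ℝ => α^2 / Real.log (1/α)) (nhdsWithin 0 (Ioi 0)) (nhds 0) := by
      refine Tendsto.div_atTop (a := 0) ?_ L_atTop
      simpa using ((continuous_pow 2).tendsto (0:ℝ)).mono_left
        (nhdsWithin_le_nhds (s := Ioi (0:ℝ)))
    have final := (((h1.add (tendsto_const_nhds (x := (2:ℝ)))).const_mul ((1/2)*c)).sub
      (h2.const_mul (1/2))).add (h3.const_mul (1/2))
    convert final using 2
    ring

theorem stmt6 {d : ℕ} (β : Fin d → ℝ)
    (φ : ℝ → (Fin d → ℝ) → ℝ)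
    (hφ : ∀ α γ, φ α γ = (1/2) * ∑ i,
      (γ i * Real.arsinh (γ i / α ^ 2) - Real.sqrt (γ i ^ 2 + α ^ 4) + α ^ 2)) :
    Filter.Tendsto (fun α => φ α β / Real.log (1/α))
      (nhdsWithin 0 (Set.Ioi 0)) (nhds (∑ i, |β i|)) := by
  have : (fun α => φ α β / Real.log (1/α)) = fun α =>
      ∑ i, (1/2) * (β i * Real.arsinh (β i / α^2) - Real.sqrt ((β i)^2 + α^4) + α^2)
        / Real.log (1/α) := by
    funext α
    rw [hφ, Finset.mul_sum, Finset.sum_div]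
  rw [this]
  exact tendsto_finset_sum _ fun i _ => aux (β i)
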